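/- arXiv:math/9812002 — 4 statements merged into one kernel-verified Lean document; each statement's English description precedes it below -/
import Mathlib

section
/- ((1+t³)^{2g} - t^{2g}(1+t)^{2g}) is divisible by (1-t²)(1-t⁴) in ℤ[t] for every natural number g ≥ 1; equivalently, the Harder–Narasimhan expression P_g(t) = ((1+t³)^{2g} - t^{2g}(1+t)^{2g})/((1-t²)(1-t⁴)) is a polynomial with integer coefficients. -/
open Polynomial

/-- `(1-t²)(1-t⁴)` divides `(1+t³)^{2g} - t^{2g}(1+t)^{2g}` in `ℤ[t]`
for every `g ≥ 1`; i.e. the Harder–Narasimhan expression is a polynomial with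
integer coefficients. -/
theorem HN_numerator_divisible (g : ℕ) (hg : 1 ≤ g) :
    ((1 - X ^ 2) * (1 - X ^ 4) : Polynomial ℤ) ∣
      ((1 + X ^ 3) ^ (2 * g) - X ^ (2 * g) * (1 + X) ^ (2 * g)) := by
  obtain ⟨k, rfl⟩ := Nat.exists_eq_add_of_le hg
  have key : ((1 - X + X ^ 2) ^ 2 - X ^ 2 : Polynomial ℤ) ∣
      (1 - X + X ^ 2) ^ (2 * (1 + k)) - X ^ (2 * (1 + k)) := by
    rw [pow_mul, pow_mul]
    exact sub_dvd_pow_sub_pow _ _ _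
  obtain ⟨q, hq⟩ := key
  have heq : ((1 + X ^ 3) ^ (2 * (1 + k)) - X ^ (2 * (1 + k)) * (1 + X) ^ (2 * (1 + k))
      : Polynomial ℤ) =
      (1 + X) ^ (2 * (1 + k)) * ((1 - X + X ^ 2) ^ (2 * (1 + k)) - X ^ (2 * (1 + k))) := by
    rw [show ((1 : Polynomial ℤ) + X ^ 3) = (1 + X) * (1 - X + X ^ 2) from by ring, mul_pow]
    ring
  rw [heq, hq]
  exact ⟨(1 + X) ^ (2 * k) * q, by ring⟩
end

section
/- ((1+t³)^{2g} − (t+t²)^{2g}) is divisible by (1−t²)(1−t⁴) in ℤ[t] for every g ≥ 1. -/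
open Polynomial

/-- `(1−t²)(1−t⁴)` divides `(1+t³)^{2g} − (t+t²)^{2g}` in `ℤ[t]`
for every `g ≥ 1`. -/
theorem punctured_HN_numerator_divisible (g : ℕ) (hg : 1 ≤ g) :
    ((1 - X ^ 2) * (1 - X ^ 4) : Polynomial ℤ) ∣
      ((1 + X ^ 3) ^ (2 * g) - (X + X ^ 2) ^ (2 * g)) := by
  have h1 : ((1 - X) ^ 2 * (1 + X ^ 2) : Polynomial ℤ) ∣
      (1 - X + X ^ 2) ^ (2 * g) - X ^ (2 * g) := by
    have h := sub_dvd_pow_sub_pow ((1 - X + X ^ 2) ^ 2 : Polynomial ℤ) (X ^ 2) g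
    rw [← pow_mul, ← pow_mul] at h
    have e : ((1 - X + X ^ 2) ^ 2 - X ^ 2 : Polynomial ℤ) = (1 - X) ^ 2 * (1 + X ^ 2) := by
      ring
    rwa [e] at h
  have h2 : ((1 + X) ^ 2 : Polynomial ℤ) ∣ (1 + X) ^ (2 * g) :=
    pow_dvd_pow _ (by omega)
  have key := mul_dvd_mul h2 h1
  have e1 : ((1 + X) ^ 2 * ((1 - X) ^ 2 * (1 + X ^ 2)) : Polynomial ℤ) =
      (1 - X ^ 2) * (1 - X ^ 4) := by ring
  have e2 : ((1 + X) ^ (2 * g) * ((1 - X + X ^ 2) ^ (2 * g) - X ^ (2 * g)) : Polynomial ℤ) =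
      (1 + X ^ 3) ^ (2 * g) - (X + X ^ 2) ^ (2 * g) := by
    rw [mul_sub, ← mul_pow, ← mul_pow]
    have b1 : ((1 + X) * (1 - X + X ^ 2) : Polynomial ℤ) = 1 + X ^ 3 := by ring
    have b2 : ((1 + X) * X : Polynomial ℤ) = X + X ^ 2 := by ring
    rw [b1, b2]
  rwa [e1, e2] at key
end

section
/- The center of SU(2) is {I, -I}, and the conjugation action of SU(2)/{±I} on the set {(A_1,B_1,…,A_g,B_g) ∈ SU(2)^{2g} : ∏_i [A_i,B_i] = -I} is free, i.e., if X ∈ SU(2) satisfies X A_i X⁻¹ = A_i and X B_i X⁻¹ = B_i for all i, then X = ±I. -/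
open Matrix

lemma scalar_pm_one (X : Matrix (Fin 2) (Fin 2) ℂ)
    (h01 : X 0 1 = 0) (h10 : X 1 0 = 0) (hd : X 0 0 = X 1 1)
    (hdet : X.det = 1) : X = 1 ∨ X = -1 := by
  rw [Matrix.det_fin_two, h01, h10, ← hd] at hdet
  have hsq : X 0 0 = 1 ∨ X 0 0 = -1 := by
    have h : (X 0 0 - 1) * (X 0 0 + 1) = 0 := by linear_combination hdet
    rcases mul_eq_zero.1 h with h | h
    · exact Or.inl (by linear_combination h)
    · exact Or.inr (by linear_combination h)
  rcases hsq with h | h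
  · left
    refine Matrix.ext ?_
    simp only [Fin.forall_fin_two]
    refine ⟨⟨?_, ?_⟩, ?_, ?_⟩ <;>
      simp [Matrix.one_apply, h01, h10, h, hd.symm.trans h]
  · right
    refine Matrix.ext ?_
    simp only [Fin.forall_fin_two]
    refine ⟨⟨?_, ?_⟩, ?_, ?_⟩ <;>
      simp [Matrix.one_apply, h01, h10, h, hd.symm.trans h]

lemma comm_entries {X A : Matrix (Fin 2) (Fin 2) ℂ} (h : A * X = X * A) :
    (A 0 0 * X 0 0 + A 0 1 * X 1 0 = X 0 0 * A 0 0 + X 0 1 * A 1 0) ∧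
    (A 0 0 * X 0 1 + A 0 1 * X 1 1 = X 0 0 * A 0 1 + X 0 1 * A 1 1) ∧
    (A 1 0 * X 0 0 + A 1 1 * X 1 0 = X 1 0 * A 0 0 + X 1 1 * A 1 0) ∧
    (A 1 0 * X 0 1 + A 1 1 * X 1 1 = X 1 0 * A 0 1 + X 1 1 * A 1 1) := by
  refine ⟨?_, ?_, ?_, ?_⟩
  · simpa [Matrix.mul_apply, Fin.sum_univ_two] using congrFun (congrFun h 0) 0
  · simpa [Matrix.mul_apply, Fin.sum_univ_two] using congrFun (congrFun h 0) 1
  · simpa [Matrix.mul_apply, Fin.sum_univ_two] using congrFun (congrFun h 1) 0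
  · simpa [Matrix.mul_apply, Fin.sum_univ_two] using congrFun (congrFun h 1) 1

lemma comm_of_comm_nonscalar {X A B : Matrix (Fin 2) (Fin 2) ℂ}
    (hns : ¬(X 0 1 = 0 ∧ X 1 0 = 0 ∧ X 0 0 = X 1 1))
    (hA : A * X = X * A) (hB : B * X = X * B) : A * B = B * A := by
  obtain ⟨eA00, eA01, eA10, eA11⟩ := comm_entries hA
  obtain ⟨eB00, eB01, eB10, eB11⟩ := comm_entries hB
  set a := X 0 0; set b := X 0 1; set c := X 1 0; set d := X 1 1
  by_cases hb : b ≠ 0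
  · have hA10 : A 1 0 = A 0 1 * c / b := by field_simp; linear_combination -eA00
    have hA11 : A 1 1 = A 0 0 + A 0 1 * (d - a) / b := by
      field_simp; linear_combination -eA01
    have hB10 : B 1 0 = B 0 1 * c / b := by field_simp; linear_combination -eB00
    have hB11 : B 1 1 = B 0 0 + B 0 1 * (d - a) / b := by
      field_simp; linear_combination -eB01
    refine Matrix.ext ?_
    simp only [Fin.forall_fin_two]
    refine ⟨⟨?_, ?_⟩, ?_, ?_⟩ <;>
      · simp only [Matrix.mul_apply, Fin.sum_univ_two, hA10, hA11, hB10, hB11]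
        field_simp
        try ring
  push_neg at hb
  by_cases hc : c ≠ 0
  · have hA01 : A 0 1 = 0 := by
      have h : A 0 1 * c = 0 := by rw [hb] at eA00; linear_combination eA00
      exact (mul_eq_zero.1 h).resolve_right hc
    have hA11 : A 1 1 = A 0 0 + A 1 0 * (d - a) / c := by
      field_simp; linear_combination eA10
    have hB01 : B 0 1 = 0 := by
      have h : B 0 1 * c = 0 := by rw [hb] at eB00; linear_combination eB00
      exact (mul_eq_zero.1 h).resolve_right hc
    have hB11 : B 1 1 = B 0 0 + B 1 0 * (d - a) / c := by
      field_simp; linear_combination eB10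
    refine Matrix.ext ?_
    simp only [Fin.forall_fin_two]
    refine ⟨⟨?_, ?_⟩, ?_, ?_⟩ <;>
      · simp only [Matrix.mul_apply, Fin.sum_univ_two, hA01, hA11, hB01, hB11]
        field_simp
        try ring
  push_neg at hc
  have had : a ≠ d := fun h => hns ⟨hb, hc, h⟩
  have hsub : a - d ≠ 0 := sub_ne_zero.2 had
  have hA01 : A 0 1 = 0 := by
    have h : A 0 1 * (d - a) = 0 := by rw [hb] at eA01; linear_combination eA01
    rcases mul_eq_zero.1 h with h | h
    · exact h
    · exact absurd (by linear_combination -h) hsub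
  have hA10 : A 1 0 = 0 := by
    have h : A 1 0 * (a - d) = 0 := by rw [hc] at eA10; linear_combination eA10
    exact (mul_eq_zero.1 h).resolve_right hsub
  have hB01 : B 0 1 = 0 := by
    have h : B 0 1 * (d - a) = 0 := by rw [hb] at eB01; linear_combination eB01
    rcases mul_eq_zero.1 h with h | h
    · exact h
    · exact absurd (by linear_combination -h) hsub
  have hB10 : B 1 0 = 0 := by
    have h : B 1 0 * (a - d) = 0 := by rw [hc] at eB10; linear_combination eB10
    exact (mul_eq_zero.1 h).resolve_right hsub
  refine Matrix.ext ?_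
  simp only [Fin.forall_fin_two]
  refine ⟨⟨?_, ?_⟩, ?_, ?_⟩ <;>
    simp [Matrix.mul_apply, Fin.sum_univ_two, hA01, hA10, hB01, hB10, mul_comm]

lemma mem_su2_det {X : Matrix (Fin 2) (Fin 2) ℂ}
    (h : X ∈ Matrix.specialUnitaryGroup (Fin 2) ℂ) : X.det = 1 :=
  (Matrix.mem_specialUnitaryGroup_iff.1 h).2

/-- The center of SU(2) is `{I, -I}`, and the conjugation action of
`SU(2)/{±I}` on `{(A_i, B_i) ∈ SU(2)^{2g} : ∏ [A_i, B_i] = -I}` is free: any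
`X ∈ SU(2)` commuting with all the `A_i` and `B_i` is `±I`. -/
theorem su2_center_and_free_action (g : ℕ) :
    -- the center of SU(2) is {I, -I}
    (∀ X : Matrix (Fin 2) (Fin 2) ℂ, X ∈ Matrix.specialUnitaryGroup (Fin 2) ℂ →
      ((∀ Y : Matrix (Fin 2) (Fin 2) ℂ, Y ∈ Matrix.specialUnitaryGroup (Fin 2) ℂ →
        X * Y = Y * X) ↔ (X = 1 ∨ X = -1))) ∧
    -- freeness of the conjugation action on μ_g⁻¹(I)
    (∀ A B : Fin g → Matrix (Fin 2) (Fin 2) ℂ,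
      (∀ i, A i ∈ Matrix.specialUnitaryGroup (Fin 2) ℂ) →
      (∀ i, B i ∈ Matrix.specialUnitaryGroup (Fin 2) ℂ) →
      ((List.finRange g).map (fun i => A i * B i * (A i)⁻¹ * (B i)⁻¹)).prod = -1 →
      ∀ X : Matrix (Fin 2) (Fin 2) ℂ, X ∈ Matrix.specialUnitaryGroup (Fin 2) ℂ →
        (∀ i, X * A i * X⁻¹ = A i ∧ X * B i * X⁻¹ = B i) →
        X = 1 ∨ X = -1) := by
  constructor
  · intro X hX
    constructor
    · intro hcomm
      set Y1 : Matrix (Fin 2) (Fin 2) ℂ := !![Complex.I, 0; 0, -Complex.I] with hY1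
      set Y2 : Matrix (Fin 2) (Fin 2) ℂ := !![0, 1; -1, 0] with hY2
      have hY1mem : Y1 ∈ Matrix.specialUnitaryGroup (Fin 2) ℂ := by
        rw [Matrix.mem_specialUnitaryGroup_iff]
        constructor
        · rw [Matrix.mem_unitaryGroup_iff]
          show Y1 * Y1ᴴ = 1
          refine Matrix.ext ?_
          simp only [Fin.forall_fin_two]
          refine ⟨⟨?_, ?_⟩, ?_, ?_⟩ <;>
            norm_num [hY1, Matrix.mul_apply, Fin.sum_univ_two,
              Matrix.conjTranspose_apply, Matrix.one_apply, Complex.ext_iff]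
        · rw [hY1, Matrix.det_fin_two_of]
          simp [Complex.ext_iff]
      have hY2mem : Y2 ∈ Matrix.specialUnitaryGroup (Fin 2) ℂ := by
        rw [Matrix.mem_specialUnitaryGroup_iff]
        constructor
        · rw [Matrix.mem_unitaryGroup_iff]
          show Y2 * Y2ᴴ = 1
          refine Matrix.ext ?_
          simp only [Fin.forall_fin_two]
          refine ⟨⟨?_, ?_⟩, ?_, ?_⟩ <;>
            norm_num [hY2, Matrix.mul_apply, Fin.sum_univ_two,
              Matrix.conjTranspose_apply, Matrix.one_apply]
        · rw [hY2, Matrix.det_fin_two_of]; norm_num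
      obtain ⟨e100, e101, e110, e111⟩ := comm_entries (hcomm Y1 hY1mem)
      obtain ⟨e200, e201, e210, e211⟩ := comm_entries (hcomm Y2 hY2mem)
      simp only [hY1, hY2, Matrix.cons_val', Matrix.cons_val_zero, Matrix.cons_val_one,
        Matrix.head_cons, Matrix.head_fin_const, Matrix.empty_val',
        Matrix.cons_val_fin_one, Matrix.of_apply] at e100 e101 e110 e111 e200 e201 e210 e211
      have h01 : X 0 1 = 0 := by
        have h : X 0 1 * (2 * Complex.I) = 0 := by linear_combination -e101
        have h2 : (2 * Complex.I : ℂ) ≠ 0 := by simp [Complex.ext_iff]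
        exact (mul_eq_zero.1 h).resolve_right h2
      have h10 : X 1 0 = 0 := by
        have h : X 1 0 * (2 * Complex.I) = 0 := by linear_combination e110
        have h2 : (2 * Complex.I : ℂ) ≠ 0 := by simp [Complex.ext_iff]
        exact (mul_eq_zero.1 h).resolve_right h2
      have hd : X 0 0 = X 1 1 := by linear_combination e201
      exact scalar_pm_one X h01 h10 hd (mem_su2_det hX)
    · rintro (rfl | rfl) Y _ <;> simp
  · intro A B hA hB hprod X hX hcomm
    have hdetX : X.det = 1 := mem_su2_det hX
    by_cases hsc : X 0 1 = 0 ∧ X 1 0 = 0 ∧ X 0 0 = X 1 1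
    · exact scalar_pm_one X hsc.1 hsc.2.1 hsc.2.2 hdetX
    · exfalso
      haveI : Invertible X := X.invertibleOfIsUnitDet (by rw [hdetX]; exact isUnit_one)
      have hXA : ∀ i, A i * X = X * A i := by
        intro i
        have h := congrArg (· * X) (hcomm i).1
        simpa [Matrix.inv_mul_cancel_right_of_invertible] using h.symm
      have hXB : ∀ i, B i * X = X * B i := by
        intro i
        have h := congrArg (· * X) (hcomm i).2
        simpa [Matrix.inv_mul_cancel_right_of_invertible] using h.symm
      have hone : ((List.finRange g).map
          (fun i => A i * B i * (A i)⁻¹ * (B i)⁻¹)).prod = 1 := by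
        apply List.prod_eq_one
        intro x hx
        obtain ⟨i, _, rfl⟩ := List.mem_map.1 hx
        haveI : Invertible (A i) :=
          (A i).invertibleOfIsUnitDet (by rw [mem_su2_det (hA i)]; exact isUnit_one)
        haveI : Invertible (B i) :=
          (B i).invertibleOfIsUnitDet (by rw [mem_su2_det (hB i)]; exact isUnit_one)
        have hABi : A i * B i = B i * A i :=
          comm_of_comm_nonscalar hsc (hXA i) (hXB i)
        rw [hABi, Matrix.mul_inv_cancel_right_of_invertible,
          Matrix.mul_inv_of_invertible]
      rw [hone] at hprod
      have h := congrFun (congrFun hprod 0) 0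
      norm_num [Matrix.one_apply, Matrix.neg_apply] at h
end

section
/- For all A, B ∈ SU(2): tr(ABA⁻¹B⁻¹) = (tr A)² + (tr B)² + (tr AB)² − tr(A)tr(B)tr(AB) − 2. In particular, ABA⁻¹B⁻¹ = −I implies (tr A)² + (tr B)² + (tr AB)² = tr(A)tr(B)tr(AB). -/
open Matrix

lemma su2_fricke_key (A B : Matrix (Fin 2) (Fin 2) ℂ) (hA : A.det = 1) (hB : B.det = 1) :
    (A * B * A⁻¹ * B⁻¹).trace =
      A.trace ^ 2 + B.trace ^ 2 + (A * B).trace ^ 2 -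
        A.trace * B.trace * (A * B).trace - 2 := by
  have hAi : A⁻¹ = A.trace • (1 : Matrix (Fin 2) (Fin 2) ℂ) - A := by
    rw [inv_def, hA, Matrix.adjugate_fin_two]
    ext i j
    fin_cases i <;> fin_cases j <;>
      simp [Matrix.trace_fin_two, Matrix.one_apply]
  have hBi : B⁻¹ = B.trace • (1 : Matrix (Fin 2) (Fin 2) ℂ) - B := by
    rw [inv_def, hB, Matrix.adjugate_fin_two]
    ext i j
    fin_cases i <;> fin_cases j <;>
      simp [Matrix.trace_fin_two, Matrix.one_apply]
  rw [hAi, hBi]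
  rw [Matrix.det_fin_two] at hA hB
  simp only [Matrix.trace_fin_two, Matrix.mul_apply, Fin.sum_univ_two, Matrix.one_apply,
    Matrix.sub_apply, Matrix.smul_apply, smul_eq_mul]
  norm_num
  linear_combination ((B 0 0 + B 1 1)^2 - 2) * hA +
    ((A 0 0)^2 + 2*(A 0 1)*(A 1 0) + (A 1 1)^2) * hB

/-- The Fricke trace identity in SU(2):
`tr(ABA⁻¹B⁻¹) = (tr A)² + (tr B)² + (tr AB)² − (tr A)(tr B)(tr AB) − 2`.
In particular, if `ABA⁻¹B⁻¹ = −I` then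
`(tr A)² + (tr B)² + (tr AB)² = (tr A)(tr B)(tr AB)`. -/
theorem su2_fricke_trace_identity
    (A B : Matrix (Fin 2) (Fin 2) ℂ)
    (hA : A ∈ Matrix.specialUnitaryGroup (Fin 2) ℂ)
    (hB : B ∈ Matrix.specialUnitaryGroup (Fin 2) ℂ) :
    (A * B * A⁻¹ * B⁻¹).trace =
      A.trace ^ 2 + B.trace ^ 2 + (A * B).trace ^ 2 -
        A.trace * B.trace * (A * B).trace - 2 ∧
    (A * B * A⁻¹ * B⁻¹ = -1 →
      A.trace ^ 2 + B.trace ^ 2 + (A * B).trace ^ 2 =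
        A.trace * B.trace * (A * B).trace) := by
  have hdA : A.det = 1 := (Matrix.mem_specialUnitaryGroup_iff.mp hA).2
  have hdB : B.det = 1 := (Matrix.mem_specialUnitaryGroup_iff.mp hB).2
  have key := su2_fricke_key A B hdA hdB
  refine ⟨key, fun h => ?_⟩
  rw [h] at key
  have : (-1 : Matrix (Fin 2) (Fin 2) ℂ).trace = -2 := by
    simp [Matrix.trace_fin_two, Matrix.one_apply]
  rw [this] at key
  linear_combination -key
end
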